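/- Let n ≥ 1, let f_0, …, f_n be n+1 polynomials in ℚ[x_0, …, x_{n-1}], let C be their Dixon cancellation matrix, and let d : {0,…,n-1} → ℕ be such that for every j and every k the degree of f_j in the variable x_k is at most d_k. Then for every k ∈ {0,…,n-1}, the degree of det C in the barred variable x̄_k is at most (n−k)·d_k. -/

import Mathlib

open MvPolynomial

/-- The `i`-th Dixon substitution homomorphism `φ_i : ℚ[x] → ℚ[x, x̄]`,
sending `x_k ↦ x̄_k` for `k < i` and `x_k ↦ x_k` for `k ≥ i`.
Here `Sum.inl k` is the unbarred variable `x_k` and `Sum.inr k` is the barred `x̄_k`. -/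
noncomputable def dixonPhi (n : ℕ) (i : Fin (n + 1)) :
    MvPolynomial (Fin n) ℚ →ₐ[ℚ] MvPolynomial (Fin n ⊕ Fin n) ℚ :=
  aeval (fun k : Fin n => if (k : ℕ) < (i : ℕ) then X (Sum.inr k) else X (Sum.inl k))

/-- The Dixon cancellation matrix of `f_0, …, f_n`, with entries `C i j = φ_i (f j)`. -/
noncomputable def dixonCancellationMatrix (n : ℕ)
    (f : Fin (n + 1) → MvPolynomial (Fin n) ℚ) :
    Matrix (Fin (n + 1)) (Fin (n + 1)) (MvPolynomial (Fin n ⊕ Fin n) ℚ) :=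
  fun i j => dixonPhi n i (f j)

lemma degreeOf_eq_zero_of_not_mem_vars {σ R : Type*} [CommSemiring R]
    {p : MvPolynomial σ R} {i : σ} (h : i ∉ p.vars) : degreeOf i p = 0 := by
  classical
  rw [degreeOf, Multiset.count_eq_zero]
  intro hmem
  exact h (Multiset.mem_toFinset.mpr hmem)

lemma dixonPhi_eq_rename (n : ℕ) (i : Fin (n + 1)) (p : MvPolynomial (Fin n) ℚ) :
    dixonPhi n i p =
      rename (fun k : Fin n => if (k : ℕ) < (i : ℕ) then Sum.inr k else Sum.inl k) p := by
  rw [rename_eq_aeval, dixonPhi]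
  congr 2
  funext k
  simp only [Function.comp_apply]
  by_cases h : (k : ℕ) < (i : ℕ) <;> simp [h]

lemma dixon_entry_degreeOf (n : ℕ) (i : Fin (n + 1)) (p : MvPolynomial (Fin n) ℚ)
    (k : Fin n) :
    degreeOf (Sum.inr k) (dixonPhi n i p) =
      if (k : ℕ) < (i : ℕ) then degreeOf k p else 0 := by
  rw [dixonPhi_eq_rename]
  set g : Fin n → Fin n ⊕ Fin n := fun k => if (k : ℕ) < (i : ℕ) then Sum.inr k else Sum.inl k
  have hg : Function.Injective g := by
    intro a b hab
    by_cases ha : (a : ℕ) < (i : ℕ) <;> by_cases hb : (b : ℕ) < (i : ℕ) <;>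
      simp_all [g]
  by_cases hk : (k : ℕ) < (i : ℕ)
  · have : Sum.inr k = g k := by simp [g, hk]
    rw [if_pos hk, this, degreeOf_rename_of_injective hg]
  · rw [if_neg hk]
    apply degreeOf_eq_zero_of_not_mem_vars
    intro hmem
    obtain ⟨a, _, ha⟩ := mem_vars_rename _ _ hmem
    by_cases h : (a : ℕ) < (i : ℕ) <;> simp_all [g] <;> omega

/-- Degree bound in the barred variable `x̄_k` of the determinant of the
Dixon cancellation matrix: at most `(n−k)·d_k`. -/
theorem dixon_det_degreeOf_barred_le (n : ℕ) (hn : 1 ≤ n)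
    (f : Fin (n + 1) → MvPolynomial (Fin n) ℚ) (d : Fin n → ℕ)
    (hd : ∀ j : Fin (n + 1), ∀ k : Fin n, degreeOf k (f j) ≤ d k) :
    ∀ k : Fin n,
      degreeOf (Sum.inr k) (dixonCancellationMatrix n f).det ≤ (n - (k : ℕ)) * d k := by
  intro k
  rw [Matrix.det_apply']
  refine le_trans (degreeOf_sum_le _ _ _) ?_
  rw [Finset.sup_le_iff]
  intro σ _
  refine le_trans (degreeOf_mul_le _ _ _) ?_
  have hsign : degreeOf (Sum.inr k)
      ((Equiv.Perm.sign σ : ℤ) : MvPolynomial (Fin n ⊕ Fin n) ℚ) = 0 := by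
    rcases Int.units_eq_one_or (Equiv.Perm.sign σ) with h | h <;>
      simp [h, degreeOf, degrees_one, degrees_neg]
  rw [hsign, zero_add]
  refine le_trans (degreeOf_prod_le _ _ _) ?_
  have hterm : ∀ j : Fin (n + 1),
      degreeOf (Sum.inr k) (dixonCancellationMatrix n f (σ j) j) ≤
        if (k : ℕ) < ((σ j : Fin (n + 1)) : ℕ) then d k else 0 := by
    intro j
    rw [dixonCancellationMatrix, dixon_entry_degreeOf]
    split
    · exact hd j k
    · exact le_rfl
  refine le_trans (Finset.sum_le_sum fun j _ => hterm j) ?_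
  rw [Equiv.sum_comp σ (fun r : Fin (n + 1) => if (k : ℕ) < (r : ℕ) then d k else 0)]
  have : (∑ r : Fin (n + 1), if (k : ℕ) < (r : ℕ) then d k else 0) =
      (Finset.univ.filter (fun r : Fin (n + 1) => (k : ℕ) < (r : ℕ))).card * d k := by
    rw [← Finset.sum_filter, Finset.sum_const, smul_eq_mul]
  rw [this]
  have hcard : (Finset.univ.filter (fun r : Fin (n + 1) => (k : ℕ) < (r : ℕ))).card
      = n - (k : ℕ) := by
    have : (Finset.univ.filter (fun r : Fin (n + 1) => (k : ℕ) < (r : ℕ)))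
        = Finset.Ioi (⟨(k : ℕ), by omega⟩ : Fin (n + 1)) := by
      ext r
      simp [Finset.mem_Ioi, Fin.lt_def]
    rw [this, Fin.card_Ioi]
    simp
  rw [hcard]
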